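/- Let H be a Hilbert space with inner product a, and let V = V₁ + ⋯ + V_m be a decomposition of a closed subspace V into closed subspaces such that: (stability) every v ∈ V admits a decomposition v = Σ v_i with v_i ∈ V_i and Σ a(v_i,v_i) ≤ K₁ a(v,v); (boundedness) for all decompositions, a(Σ v_i, Σ v_i) ≤ K₂ Σ a(v_i, v_i). Let P_i : H → V_i be the a-orthogonal projections and T = Σ P_i. Then (1/K₁) a(v,v) ≤ a(Tv, v) ≤ K₂ a(v,v) for all v ∈ V. -/
import Mathlib


open scoped RealInnerProductSpace

/-- Abstract additive Schwarz spectral bound: a stable and bounded splitting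
`V = V₀ + ⋯ + V_m` yields `(1/K₁) a(v,v) ≤ a(Tv,v) ≤ K₂ a(v,v)` on `V` for the
additive preconditioner `T = Σ P_i` built from the orthogonal projections. -/
theorem stmt6
    {H : Type*} [NormedAddCommGroup H] [InnerProductSpace ℝ H] [CompleteSpace H]
    {m : ℕ} (V : Submodule ℝ H) (Vi : Fin (m + 1) → Submodule ℝ H)
    (hVi : ∀ i, Vi i ≤ V)
    (K₁ K₂ : ℝ) (hK₁ : 0 < K₁) (hK₂ : 0 < K₂)
    (hstab : ∀ v ∈ V, ∃ d : Fin (m + 1) → H,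
      (∀ i, d i ∈ Vi i) ∧ (∑ i, d i) = v ∧ (∑ i, ‖d i‖ ^ 2) ≤ K₁ * ‖v‖ ^ 2)
    (hbdd : ∀ d : Fin (m + 1) → H, (∀ i, d i ∈ Vi i) →
      ‖∑ i, d i‖ ^ 2 ≤ K₂ * ∑ i, ‖d i‖ ^ 2)
    (P : Fin (m + 1) → H →L[ℝ] H)
    (hPmem : ∀ i v, P i v ∈ Vi i)
    (hPorth : ∀ i (v : H), ∀ w ∈ Vi i, ⟪v - P i v, w⟫ = 0) :
    ∀ v ∈ V, (1 / K₁) * ‖v‖ ^ 2 ≤ ⟪(∑ i, P i) v, v⟫ ∧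
      ⟪(∑ i, P i) v, v⟫ ≤ K₂ * ‖v‖ ^ 2 := by
  intro v hv
  have hTv : (∑ i, P i) v = ∑ i, P i v := by
    simp [ContinuousLinearMap.sum_apply]
  have key : ∀ i (w : H), w ∈ Vi i → ⟪v, w⟫ = ⟪P i v, w⟫ := by
    intro i w hw
    have h := hPorth i v w hw
    rw [inner_sub_left] at h
    linarith
  have hPsq : ∀ i, ⟪P i v, v⟫ = ‖P i v‖ ^ 2 := by
    intro i
    rw [real_inner_comm, key i _ (hPmem i v), real_inner_self_eq_norm_sq]
  have hT : ⟪(∑ i, P i) v, v⟫ = ∑ i, ‖P i v‖ ^ 2 := by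
    rw [hTv, sum_inner]
    exact Finset.sum_congr rfl fun i _ => hPsq i
  have hSnn : (0:ℝ) ≤ ∑ i, ‖P i v‖ ^ 2 :=
    Finset.sum_nonneg fun i _ => sq_nonneg _
  constructor
  · -- lower bound
    obtain ⟨d, hd, hsum, hstb⟩ := hstab v hv
    have h1 : ‖v‖ ^ 2 = ∑ i, ⟪P i v, d i⟫ := by
      calc ‖v‖ ^ 2 = ⟪v, v⟫ := (real_inner_self_eq_norm_sq v).symm
        _ = ⟪v, ∑ i, d i⟫ := by rw [hsum]
        _ = ∑ i, ⟪v, d i⟫ := inner_sum _ _ _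
        _ = ∑ i, ⟪P i v, d i⟫ := Finset.sum_congr rfl fun i _ => key i _ (hd i)
    have h2 : ∑ i, ⟪P i v, d i⟫ ≤ ∑ i, ‖P i v‖ * ‖d i‖ :=
      Finset.sum_le_sum fun i _ => real_inner_le_norm _ _
    have h3 : (∑ i, ‖P i v‖ * ‖d i‖) ^ 2 ≤
        (∑ i, ‖P i v‖ ^ 2) * ∑ i, ‖d i‖ ^ 2 :=
      Finset.sum_mul_sq_le_sq_mul_sq _ _ _
    rw [hT]
    have hnn2 : (0:ℝ) ≤ ‖v‖ ^ 2 := sq_nonneg _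
    have h4 : (‖v‖ ^ 2) ^ 2 ≤ (∑ i, ‖P i v‖ ^ 2) * (K₁ * ‖v‖ ^ 2) := by
      calc (‖v‖ ^ 2) ^ 2 ≤ (∑ i, ‖P i v‖ * ‖d i‖) ^ 2 := by
            apply sq_le_sq' <;> nlinarith
        _ ≤ (∑ i, ‖P i v‖ ^ 2) * ∑ i, ‖d i‖ ^ 2 := h3
        _ ≤ (∑ i, ‖P i v‖ ^ 2) * (K₁ * ‖v‖ ^ 2) :=
            mul_le_mul_of_nonneg_left hstb hSnn
    rw [one_div, inv_mul_le_iff₀ hK₁]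
    rcases eq_or_lt_of_le hnn2 with h0 | hpos
    · rw [← h0]; positivity
    · nlinarith
  · -- upper bound
    have hC : ⟪(∑ i, P i) v, v⟫ ≤ ‖(∑ i, P i) v‖ * ‖v‖ := real_inner_le_norm _ _
    have hB : ‖(∑ i, P i) v‖ ^ 2 ≤ K₂ * ∑ i, ‖P i v‖ ^ 2 := by
      rw [hTv]; exact hbdd _ fun i => hPmem i v
    rcases eq_or_lt_of_le hSnn with hS0 | hSpos
    · rw [hT, ← hS0]
      positivity
    · rw [hT] at hC ⊢
      nlinarith [norm_nonneg ((∑ i, P i) v), norm_nonneg v, sq_nonneg ‖v‖]
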